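/- Let k be a field, let c₁, c₂ ∈ k with c₂ ≠ 1, and let A be the 2-dimensional k-vector space with basis {x, y} and the k-bilinear multiplication determined by x² = x, xy = y, yx = c₁x + c₂y, y² = (−c₁²c₂/(1−c₂)²) x + (c₁(c₂+1)/(1−c₂)) y. Let Δ : A → A ⊗ A be the linear map with Δx = x⊗x and Δy = x⊗y. Then Δ is coassociative, Δ(ab) = Δ(a)Δ(b) for all a, b ∈ A, and the self-distributivity identity holds: for all a, b ∈ A, (a·b)·x = (a·x)·(b·x) and (a·b)·y = (a·x)·(b·y). -/

import Mathlib

set_option maxHeartbeats 1000000 in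
open TensorProduct in
/-- The 2-dimensional algebra with basis `{x, y}`, `c₂ ≠ 1`,
multiplication `x² = x, xy = y, yx = c₁•x + c₂•y,
y² = (−c₁²c₂/(1−c₂)²)•x + (c₁(c₂+1)/(1−c₂))•y` and comultiplication
`Δx = x⊗x, Δy = x⊗y` is a (non-counital) self-distributive bialgebra. -/
theorem stmt_7 (k A : Type*) [Field k] (c₁ c₂ : k) (hc₂ : c₂ ≠ 1)
    [NonUnitalNonAssocRing A] [Module k A]
    [SMulCommClass k A A] [IsScalarTower k A A]
    (B : Module.Basis (Fin 2) k A) (x y : A) (hx : x = B 0) (hy : y = B 1)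
    (hxx : x * x = x) (hxy : x * y = y) (hyx : y * x = c₁ • x + c₂ • y)
    (hyy : y * y = (-(c₁ ^ 2) * c₂ / (1 - c₂) ^ 2) • x + (c₁ * (c₂ + 1) / (1 - c₂)) • y)
    (Δ : A →ₗ[k] A ⊗[k] A)
    (hΔx : Δ x = x ⊗ₜ[k] x) (hΔy : Δ y = x ⊗ₜ[k] y) :
    ((TensorProduct.assoc k A A A).toLinearMap ∘ₗ Δ.rTensor A ∘ₗ Δ = Δ.lTensor A ∘ₗ Δ)
    ∧ (∀ a b : A, Δ (a * b) = Δ a * Δ b)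
    ∧ (∀ a b : A, (a * b) * x = (a * x) * (b * x) ∧ (a * b) * y = (a * x) * (b * y)) := by
  have rep : ∀ a : A, ∃ p q : k, a = p • x + q • y := by
    intro a
    refine ⟨B.repr a 0, B.repr a 1, ?_⟩
    have h := B.sum_repr a
    rw [Fin.sum_univ_two] at h
    rw [hx, hy]
    exact h.symm
  have h1c : (1 : k) - c₂ ≠ 0 := sub_ne_zero.mpr (Ne.symm hc₂)
  set α : k := -(c₁ ^ 2) * c₂ / (1 - c₂) ^ 2 with hαdef
  set β : k := c₁ * (c₂ + 1) / (1 - c₂) with hβdef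
  have hA : α * (1 - c₂) ^ 2 = -(c₁ ^ 2) * c₂ := by
    rw [hαdef]; field_simp
  have hB : β * (1 - c₂) = c₁ * (c₂ + 1) := by
    rw [hβdef]; field_simp
  clear_value α β
  clear hαdef hβdef
  refine ⟨?_, ?_, ?_⟩
  · apply LinearMap.ext
    intro a
    obtain ⟨p, q, ha⟩ := rep a
    rw [ha]
    simp [map_add, map_smul, hΔx, hΔy, LinearMap.rTensor_tmul, LinearMap.lTensor_tmul,
      smul_tmul', tmul_smul]
  · intro a b
    obtain ⟨p, q, ha⟩ := rep a
    obtain ⟨r, s, hb⟩ := rep b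
    rw [ha, hb]
    simp only [add_mul, mul_add, smul_mul_assoc, mul_smul_comm, hxx, hxy, hyx, hyy,
      map_add, map_smul, hΔx, hΔy, smul_add, Algebra.TensorProduct.tmul_mul_tmul,
      TensorProduct.tmul_add, TensorProduct.tmul_smul]
    try simp only [← TensorProduct.smul_tmul', smul_smul]
    try match_scalars <;> ring
  · intro a b
    obtain ⟨p, q, ha⟩ := rep a
    obtain ⟨r, s, hb⟩ := rep b
    constructor <;>
    · rw [ha, hb]
      simp only [add_mul, mul_add, smul_mul_assoc, mul_smul_comm, hxx, hxy, hyx, hyy,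
        smul_add]
      match_scalars <;>
      first
        | ring1
        | (apply mul_right_cancel₀ (pow_ne_zero 2 h1c)
           first
             | linear_combination (q * s * (1 + c₂) * (1 - c₂)) * hA +
                 (q * s * c₁ * (1 - c₂)) * hB
             | linear_combination (q * s * c₂ * (1 - c₂) ^ 2) * hB
             | linear_combination (q * s * α * (1 - c₂) ^ 2) * hB
             | linear_combination (q * s * β * (1 - c₂) ^ 2 + q * s * c₁ * c₂ * (1 - c₂)) * hB +
                 (q * s * (1 + c₂) * (1 - c₂)) * hA
             | linear_combination (-(q * s * (1 + c₂) * (1 - c₂))) * hA +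
                 (-(q * s * c₁ * (1 - c₂))) * hB
             | linear_combination (-(q * s * c₂ * (1 - c₂) ^ 2)) * hB
             | linear_combination (-(q * s * α * (1 - c₂) ^ 2)) * hB
             | linear_combination (-(q * s * β * (1 - c₂) ^ 2 + q * s * c₁ * c₂ * (1 - c₂))) * hB +
                 (-(q * s * (1 + c₂) * (1 - c₂))) * hA)
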